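/- Let $0 < p < 1$ and define $g_p(\alpha) = 2\, \frac{\alpha^{\alpha}}{(\alpha-1)^{\alpha-1}}\, p^{\alpha-1}(1-p) - 1$ for real $\alpha > 1$. Then there exists exactly one $\alpha_p > \frac{1}{1-p}$ with $g_p(\alpha_p) = 0$. -/

import Mathlib

set_option maxHeartbeats 1000000

/-- `g_p(α) = 2 α^α / (α-1)^(α-1) · p^(α-1) (1-p) - 1`, with real powers. -/
noncomputable def gfun (p α : ℝ) : ℝ :=
  2 * (α ^ α / (α - 1) ^ (α - 1)) * p ^ (α - 1) * (1 - p) - 1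

/-- There is exactly one root `α_p > 1/(1-p)` of `g_p`. -/
theorem claim_unique_root (p : ℝ) (hp : 0 < p) (hp1 : p < 1) :
    ∃! α : ℝ, 1 / (1 - p) < α ∧ gfun p α = 0 := by
  have h1p : 0 < 1 - p := by linarith
  set α0 : ℝ := 1 / (1 - p) with hα0def
  have hα0 : 1 < α0 := by
    rw [hα0def, lt_div_iff₀ h1p]; linarith
  set F : ℝ → ℝ := fun α => Real.log 2 + Real.log (1 - p) + Real.log α * α
      - Real.log (α - 1) * (α - 1) + Real.log p * (α - 1) with hF
  -- g = exp F - 1 for α > 1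
  have hgF : ∀ α : ℝ, 1 < α → gfun p α = Real.exp (F α) - 1 := by
    intro α hα
    have h1 : 0 < α := by linarith
    have h2 : 0 < α - 1 := by linarith
    rw [hF, gfun]
    simp only
    rw [Real.rpow_def_of_pos h1, Real.rpow_def_of_pos h2, Real.rpow_def_of_pos hp]
    simp only [Real.exp_add, Real.exp_sub]
    rw [Real.exp_log two_pos, Real.exp_log h1p]
    ring
  -- derivative
  have hderiv : ∀ α : ℝ, 1 < α →
      HasDerivAt F (Real.log α - Real.log (α - 1) + Real.log p) α := by
    intro x hx
    have h1 : 0 < x := by linarith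
    have h2 : 0 < x - 1 := by linarith
    have d1 : HasDerivAt (fun α : ℝ => Real.log α * α) (Real.log x + 1) x := by
      have := (Real.hasDerivAt_log h1.ne').mul (hasDerivAt_id x)
      refine this.congr_deriv ?_
      simp only [id_eq, inv_mul_cancel₀ h1.ne']
      ring
    have d2 : HasDerivAt (fun α : ℝ => Real.log (α - 1) * (α - 1)) (Real.log (x - 1) + 1) x := by
      have dinner : HasDerivAt (fun α : ℝ => α - 1) 1 x := (hasDerivAt_id x).sub_const 1
      have douter : HasDerivAt (fun y : ℝ => Real.log y * y) (Real.log (x - 1) + 1) (x - 1) := by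
        have := (Real.hasDerivAt_log h2.ne').mul (hasDerivAt_id (x - 1))
        refine this.congr_deriv ?_
        simp only [id_eq, inv_mul_cancel₀ h2.ne']
        ring
      have := douter.comp x dinner
      exact this.congr_deriv (mul_one _)
    have d3 : HasDerivAt (fun α : ℝ => Real.log p * (α - 1)) (Real.log p) x := by
      have := ((hasDerivAt_id x).sub_const 1).const_mul (Real.log p)
      simpa using this
    have := ((d1.const_add (Real.log 2 + Real.log (1 - p))).sub d2).add d3
    rw [hF]
    refine this.congr_deriv ?_
    ring
  have hcont : ContinuousOn F (Set.Ici α0) := fun x hx =>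
    ((hderiv x (lt_of_lt_of_le hα0 hx)).continuousAt).continuousWithinAt
  have hanti : StrictAntiOn F (Set.Ici α0) := by
    apply strictAntiOn_of_deriv_neg (convex_Ici α0) hcont
    intro x hx
    rw [interior_Ici] at hx
    have hx1 : 1 < x := hα0.trans hx
    rw [(hderiv x hx1).deriv]
    have hxp : x * p < x - 1 := by
      have hx' : 1 < x * (1 - p) := by
        have : 1 / (1 - p) < x := hx
        rw [div_lt_iff₀ h1p] at this
        linarith
      nlinarith
    have hlt : Real.log (x * p) < Real.log (x - 1) :=
      Real.log_lt_log (by positivity) hxp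
    rw [Real.log_mul (by positivity) hp.ne'] at hlt
    linarith
  have hFα0 : F α0 = Real.log 2 := by
    have e1 : α0 - 1 = p / (1 - p) := by rw [hα0def]; field_simp; ring
    have e2 : Real.log α0 = -Real.log (1 - p) := by
      rw [hα0def, one_div, Real.log_inv]
    rw [hF]
    simp only
    rw [e2, e1, Real.log_div hp.ne' h1p.ne', hα0def]
    field_simp
    ring
  -- a point where F is negative
  have hlogp : Real.log p < 0 := Real.log_neg hp hp1
  set t : ℝ := -Real.log p with ht
  have htpos : 0 < t := by rw [ht]; linarith
  set C : ℝ := Real.log 2 + Real.log (1 - p) + 1 with hC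
  have key : ∀ α : ℝ, 1 < α →
      Real.log α * α - Real.log (α - 1) * (α - 1) ≤ Real.log α + 1 := by
    intro α hα
    have h2 : 0 < α - 1 := by linarith
    have h3 : Real.log (α / (α - 1)) ≤ α / (α - 1) - 1 :=
      Real.log_le_sub_one_of_pos (by positivity)
    rw [Real.log_div (by positivity) h2.ne'] at h3
    have h4 : α / (α - 1) - 1 = 1 / (α - 1) := by field_simp; ring
    rw [h4] at h3
    have h5 : (Real.log α - Real.log (α - 1)) * (α - 1) ≤ (1 / (α - 1)) * (α - 1) :=
      mul_le_mul_of_nonneg_right h3 h2.le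
    have h6 : (1 / (α - 1)) * (α - 1) = 1 := by field_simp
    nlinarith [h5, h6]
  obtain ⟨M, hMα0, hFM⟩ : ∃ M, α0 < M ∧ F M < 0 := by
    set M : ℝ := max (α0 + 1) (2 * (C + 2 / t + t) / t + 1) with hM
    have hM1 : α0 + 1 ≤ M := le_max_left _ _
    have hM2 : 2 * (C + 2 / t + t) / t + 1 ≤ M := le_max_right _ _
    have hMgt1 : 1 < M := by linarith
    have hMpos : 0 < M := by linarith
    refine ⟨M, by linarith, ?_⟩
    have hFle : F M ≤ C + Real.log M - t * (M - 1) := by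
      have hk := key M hMgt1
      rw [hF, hC, ht]; simp only
      linarith [hk]
    -- log M ≤ (t/2) M + 2/t - 2
    have hs : Real.sqrt M ^ 2 = M := Real.sq_sqrt hMpos.le
    have hspos : 0 < Real.sqrt M := Real.sqrt_pos.2 hMpos
    have hlogs : Real.log (Real.sqrt M) = Real.log M / 2 := Real.log_sqrt hMpos.le
    have hls : Real.log (Real.sqrt M) ≤ Real.sqrt M - 1 := Real.log_le_sub_one_of_pos hspos
    have htq : t * (2 / t) = 2 := by field_simp
    have hsqb : 2 * Real.sqrt M ≤ (t / 2) * M + 2 / t := by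
      have e : t * (Real.sqrt M - 2 / t) ^ 2
          = t * (Real.sqrt M ^ 2) - 2 * (t * (2 / t)) * Real.sqrt M + (t * (2 / t)) * (2 / t) := by
        ring
      rw [htq, hs] at e
      have h0 : 0 ≤ t * (Real.sqrt M - 2 / t) ^ 2 := mul_nonneg htpos.le (sq_nonneg _)
      nlinarith [h0, e]
    have hlogM : Real.log M ≤ (t / 2) * M + 2 / t - 2 := by
      rw [hlogs] at hls; nlinarith [hls, hsqb]
    have hMest : t * (2 * (C + 2 / t + t) / t) = 2 * (C + 2 / t + t) := by
      field_simp
    have hmul : t * (2 * (C + 2 / t + t) / t + 1) ≤ t * M :=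
      mul_le_mul_of_nonneg_left hM2 htpos.le
    nlinarith [hFle, hlogM, hmul, hMest, htpos]
  -- existence via IVT
  have hlog2 : 0 < Real.log 2 := Real.log_pos one_lt_two
  obtain ⟨α, hαmem, hFα⟩ : ∃ α ∈ Set.Ioo α0 M, F α = 0 := by
    have hsub := intermediate_value_Ioo' hMα0.le
      (hcont.mono (Set.Icc_subset_Ici_self))
    have h0 : (0:ℝ) ∈ Set.Ioo (F M) (F α0) := ⟨hFM, by rw [hFα0]; exact hlog2⟩
    obtain ⟨α, hα, hFα⟩ := hsub h0
    exact ⟨α, hα, hFα⟩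
  have hα1 : 1 < α := hα0.trans hαmem.1
  refine ⟨α, ⟨hαmem.1, ?_⟩, ?_⟩
  · rw [hgF α hα1, hFα, Real.exp_zero]; ring
  · rintro β ⟨hβ0, hβroot⟩
    have hβ1 : 1 < β := hα0.trans hβ0
    have hFβ : F β = 0 := by
      rw [hgF β hβ1] at hβroot
      have : Real.exp (F β) = 1 := by linarith
      rw [← Real.exp_zero] at this
      exact Real.exp_eq_exp.mp this
    exact hanti.injOn (Set.mem_Ici.2 hβ0.le) (Set.mem_Ici.2 hαmem.1.le) (by rw [hFβ, hFα])
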